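/- arXiv:2504.13613 — 2 statements merged into one kernel-verified Lean document; each statement's English description precedes it below -/
import Mathlib

section
/- Let $P$ be a joint distribution of $N$ binary random variables and let $G$ be a directed acyclic graph on the variables in which each node has at most one parent (a directed tree/forest with edge set $\mathcal{T}$). Let $Q$ be the distribution defined by $Q(x_1,\dots,x_N) = \prod_i P(x_i \mid x_{pa(i)})$. Then the Kullback–Leibler divergence satisfies $D(P \| Q) = -\sum_{(i,j)\in\mathcal{T}} I(X_i; X_j) + \sum_{i=1}^N H(X_i) - H(X_1,\dots,X_N)$, where $I$ is mutual information and $H$ is Shannon entropy. -/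
open scoped Classical

/-- Chow–Liu decomposition: for a joint distribution `P` over `N` binary variables and a
directed forest structure given by `pa` (each node has at most one parent, with smaller
index), let `Q` be the tree-structured Bayesian network distribution built from the true
conditionals of `P`. Then
`D(P‖Q) = -∑_{(j,i) ∈ 𝒯} I(X_j; X_i) + ∑_i H(X_i) - H(X_1,…,X_N)`. -/
theorem stmt_7 (N : ℕ) (P : (Fin N → Bool) → ℝ)
    (hpos : ∀ q, 0 < P q) (hsum : ∑ q : Fin N → Bool, P q = 1)
    (pa : Fin N → Option (Fin N)) (hacyc : ∀ i j, pa i = some j → j < i)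
    -- single-variable marginals
    (M1 : Fin N → Bool → ℝ)
    (hM1 : ∀ i b, M1 i b = ∑ q ∈ Finset.univ.filter (fun q : Fin N → Bool => q i = b), P q)
    -- pairwise marginals
    (M2 : Fin N → Fin N → Bool → Bool → ℝ)
    (hM2 : ∀ i j b c, M2 i j b c =
      ∑ q ∈ Finset.univ.filter (fun q : Fin N → Bool => q i = b ∧ q j = c), P q)
    -- the tree-structured Bayesian network distribution
    (Q : (Fin N → Bool) → ℝ)
    (hQ : ∀ x, Q x = ∏ i : Fin N,
      (pa i).elim (M1 i (x i)) (fun j => M2 j i (x j) (x i) / M1 j (x j)))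
    -- marginal entropies
    (H1 : Fin N → ℝ)
    (hH1 : ∀ i, H1 i = -∑ b : Bool, M1 i b * Real.log (M1 i b))
    -- joint entropy
    (Hjoint : ℝ) (hHjoint : Hjoint = -∑ q : Fin N → Bool, P q * Real.log (P q))
    -- pairwise mutual information
    (I : Fin N → Fin N → ℝ)
    (hI : ∀ j i, I j i = ∑ b : Bool, ∑ c : Bool,
      M2 j i b c * Real.log (M2 j i b c / (M1 j b * M1 i c)))
    -- Kullback–Leibler divergence
    (D : ℝ) (hD : D = ∑ q : Fin N → Bool, P q * Real.log (P q / Q q)) :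
    D = -(∑ i : Fin N, (pa i).elim 0 (fun j => I j i)) + (∑ i : Fin N, H1 i) - Hjoint := by

  have hM1pos : ∀ i b, 0 < M1 i b := by
    intro i b
    rw [hM1 i b]
    refine Finset.sum_pos (fun q _ => hpos q) ⟨fun _ => b, ?_⟩
    simp
  have hM2pos : ∀ j i : Fin N, j ≠ i → ∀ b c, 0 < M2 j i b c := by
    intro j i hji b c
    rw [hM2]
    refine Finset.sum_pos (fun q _ => hpos q) ⟨fun k => if k = j then b else c, ?_⟩
    simp [Finset.mem_filter, Ne.symm hji]
  -- fiberwise sum lemmas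
  have key1 : ∀ (i : Fin N) (f : Bool → ℝ),
      ∑ q : Fin N → Bool, P q * f (q i) = ∑ b : Bool, M1 i b * f b := by
    intro i f
    rw [← Finset.sum_fiberwise Finset.univ (fun q : Fin N → Bool => q i)
      (fun q => P q * f (q i))]
    refine Finset.sum_congr rfl fun b _ => ?_
    rw [hM1, Finset.sum_mul]
    refine Finset.sum_congr rfl fun q hq => ?_
    simp only [Finset.mem_filter] at hq
    rw [hq.2]
  have key2 : ∀ (j i : Fin N) (f : Bool → Bool → ℝ),
      ∑ q : Fin N → Bool, P q * f (q j) (q i)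
        = ∑ b : Bool, ∑ c : Bool, M2 j i b c * f b c := by
    intro j i f
    rw [← Finset.sum_fiberwise Finset.univ (fun q : Fin N → Bool => (q j, q i))
      (fun q => P q * f (q j) (q i)), Fintype.sum_prod_type]
    refine Finset.sum_congr rfl fun b _ => Finset.sum_congr rfl fun c _ => ?_
    rw [hM2, Finset.sum_mul]
    refine Finset.sum_congr ?_ fun q hq => ?_
    · ext q; simp [Prod.ext_iff]
    · simp only [Finset.mem_filter] at hq
      rw [hq.2.1, hq.2.2]
  have marg : ∀ j i : Fin N, ∀ c, ∑ b : Bool, M2 j i b c = M1 i c := by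
    intro j i c
    rw [hM1, ← Finset.sum_fiberwise (Finset.univ.filter fun q : Fin N → Bool => q i = c)
      (fun q => q j) P]
    refine Finset.sum_congr rfl fun b _ => ?_
    rw [hM2]
    refine Finset.sum_congr ?_ fun _ _ => rfl
    ext q; simp [Finset.mem_filter, and_comm]
  have hterm : ∀ (i : Fin N) (x : Fin N → Bool),
      (0:ℝ) < (pa i).elim (M1 i (x i)) (fun j => M2 j i (x j) (x i) / M1 j (x j)) := by
    intro i x
    cases h : pa i with
    | none => exact hM1pos i (x i)
    | some j =>
      have hne : j ≠ i := (hacyc i j h).ne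
      exact div_pos (hM2pos j i hne _ _) (hM1pos j _)
  have hQpos : ∀ x, 0 < Q x := by
    intro x; rw [hQ]; exact Finset.prod_pos fun i _ => hterm i x
  have hlogQ : ∀ x, Real.log (Q x) = ∑ i : Fin N,
      Real.log ((pa i).elim (M1 i (x i)) (fun j => M2 j i (x j) (x i) / M1 j (x j))) := by
    intro x; rw [hQ]; exact Real.log_prod fun i _ => (hterm i x).ne'
  have step : ∑ q : Fin N → Bool, P q * Real.log (Q q)
      = ∑ i : Fin N, ((pa i).elim 0 (fun j => I j i) - H1 i) := by
    calc ∑ q : Fin N → Bool, P q * Real.log (Q q)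
        = ∑ q : Fin N → Bool, ∑ i : Fin N, P q *
            Real.log ((pa i).elim (M1 i (q i)) (fun j => M2 j i (q j) (q i) / M1 j (q j))) := by
          simp_rw [hlogQ, Finset.mul_sum]
      _ = ∑ i : Fin N, ∑ q : Fin N → Bool, P q *
            Real.log ((pa i).elim (M1 i (q i)) (fun j => M2 j i (q j) (q i) / M1 j (q j))) :=
          Finset.sum_comm
      _ = ∑ i : Fin N, ((pa i).elim 0 (fun j => I j i) - H1 i) := by
          refine Finset.sum_congr rfl fun i _ => ?_
          cases h : pa i with
          | none =>
            simp only [h, Option.elim]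
            rw [key1 i (fun b => Real.log (M1 i b)), hH1]
            ring
          | some j =>
            have hne : j ≠ i := (hacyc i j h).ne
            simp only [h, Option.elim]
            rw [key2 j i (fun b c => Real.log (M2 j i b c / M1 j b)), hI, hH1]
            have e1 : ∀ b c : Bool, Real.log (M2 j i b c / (M1 j b * M1 i c))
                = Real.log (M2 j i b c / M1 j b) - Real.log (M1 i c) := by
              intro b c
              rw [← div_div, Real.log_div
                (div_pos (hM2pos j i hne b c) (hM1pos j b)).ne' (hM1pos i c).ne']
            have e2 : ∑ b : Bool, ∑ c : Bool, M2 j i b c * Real.log (M1 i c)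
                = ∑ c : Bool, M1 i c * Real.log (M1 i c) := by
              rw [Finset.sum_comm]
              refine Finset.sum_congr rfl fun c _ => ?_
              rw [← Finset.sum_mul, marg j i c]
            simp_rw [e1, mul_sub, Finset.sum_sub_distrib]
            rw [e2]; ring
  have hsplit : ∀ q, P q * Real.log (P q / Q q)
      = P q * Real.log (P q) - P q * Real.log (Q q) := fun q => by
    rw [Real.log_div (hpos q).ne' (hQpos q).ne', mul_sub]
  rw [hD]
  simp_rw [hsplit]
  rw [Finset.sum_sub_distrib, step, Finset.sum_sub_distrib, hHjoint]
  ring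
end

section
/- Let $\tilde\theta, \theta \in [0, \pi/2]$ with $|\tilde\theta - \theta| \le \varepsilon$. Then $|\sin^2\tilde\theta - \sin^2\theta| \le 2\varepsilon\sqrt{\sin^2\theta(1-\sin^2\theta)} + \varepsilon^2$. -/
theorem stmt_13 (θ' θ ε : ℝ) (hθ'0 : 0 ≤ θ') (hθ'1 : θ' ≤ Real.pi / 2)
    (hθ0 : 0 ≤ θ) (hθ1 : θ ≤ Real.pi / 2) (h : |θ' - θ| ≤ ε) :
    |Real.sin θ' ^ 2 - Real.sin θ ^ 2|
      ≤ 2 * ε * Real.sqrt (Real.sin θ ^ 2 * (1 - Real.sin θ ^ 2)) + ε ^ 2 := by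
  have hε : 0 ≤ ε := le_trans (abs_nonneg _) h
  have hpi := Real.pi_pos
  have hs : 0 ≤ Real.sin θ := Real.sin_nonneg_of_nonneg_of_le_pi hθ0 (by linarith)
  have hc : 0 ≤ Real.cos θ := Real.cos_nonneg_of_mem_Icc ⟨by linarith, hθ1⟩
  have hpyth := Real.sin_sq_add_cos_sq θ
  have hsq : Real.sin θ ^ 2 * (1 - Real.sin θ ^ 2) = (Real.sin θ * Real.cos θ) ^ 2 := by
    nlinarith
  rw [hsq, Real.sqrt_sq (mul_nonneg hs hc)]
  have hθ' : θ' = θ + (θ' - θ) := by ring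
  set δ := θ' - θ with hδ
  rw [hθ', Real.sin_add]
  have hsd : |Real.sin δ| ≤ ε := le_trans (Real.abs_sin_le_abs) h
  have hcd : |Real.cos δ| ≤ 1 := Real.abs_cos_le_one δ
  have hpyth2 := Real.sin_sq_add_cos_sq δ
  rw [abs_le] at hsd hcd ⊢
  obtain ⟨hsd1, hsd2⟩ := hsd
  obtain ⟨hcd1, hcd2⟩ := hcd
  have h1 : Real.sin δ ^ 2 ≤ ε ^ 2 := by nlinarith
  have h2 : 0 ≤ ε - Real.sin δ * Real.cos δ := by nlinarith
  have h3 : 0 ≤ ε + Real.sin δ * Real.cos δ := by nlinarith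
  constructor
  · nlinarith [mul_nonneg (mul_nonneg hs hc) h3,
      mul_nonneg (sq_nonneg (Real.sin δ)) (sq_nonneg (Real.cos θ)),
      mul_nonneg (sq_nonneg (Real.sin δ)) (sq_nonneg (Real.sin θ))]
  · nlinarith [mul_nonneg (mul_nonneg hs hc) h2,
      mul_nonneg (sq_nonneg (Real.sin δ)) (sq_nonneg (Real.cos θ)),
      mul_nonneg (sq_nonneg (Real.sin δ)) (sq_nonneg (Real.sin θ))]
end
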